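/- arXiv:1810.08752 — 3 statements merged into one kernel-verified Lean document; each statement's English description precedes it below -/
import Mathlib

section
/- In a Grothendieck category, the canonical morphism from the direct sum ⊕_{i∈I} M_i to the direct product ∏_{i∈I} M_i of a small family of objects is a monomorphism. -/
open CategoryTheory Limits Classical

/-- The canonical morphism from a direct sum to the direct product of a family of
objects, whose component from the `i`-th summand to the `j`-th factor is the
identity if `i = j` and zero otherwise. -/
noncomputable def coproductToProductMap {C : Type u} [Category.{v} C] [Abelian C]
    [HasLimits C] [HasColimits C] {I : Type v} (M : I → C) : (∐ M) ⟶ (∏ᶜ M) :=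
  Sigma.desc fun i => Pi.lift fun j =>
    if h : i = j then eqToHom (congrArg M h) else 0

open CategoryTheory.Limits.CoproductsFromFiniteFiltered

/-- In a Grothendieck category (abelian, Ab5, with a generator), the canonical
morphism `⊕ᵢ Mᵢ ⟶ ∏ᵢ Mᵢ` is a monomorphism. -/
theorem stmt_2 (C : Type u) [Category.{v} C] [Abelian C] [HasLimits C] [HasColimits C]
    [AB5 C] (G : C) (hG : IsSeparator G) {I : Type v} (M : I → C) :
    Mono (coproductToProductMap M) := by
  classical
  set F : Discrete I ⥤ C := Discrete.functor M with hF
  set D : Finset (Discrete I) ⥤ C := liftToFinsetObj F with hD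
  let η : D ⟶ (Functor.const (Finset (Discrete I))).obj (∏ᶜ M) :=
    { app := fun S => Sigma.desc fun x => Pi.lift fun j =>
        if h : x.1.as = j then eqToHom (congrArg M h) else 0
      naturality := by
        intro S T f
        dsimp [hD, liftToFinsetObj]
        apply Sigma.hom_ext
        intro x
        erw [← Category.assoc, liftToFinsetObj_map, colimit.ι_desc]
        erw [Category.comp_id, Sigma.ι_desc, Sigma.ι_desc]
      }
  -- each component of η is a mono
  have happ : ∀ S : Finset (Discrete I), Mono (η.app S) := by
    intro S
    haveI : HasFiniteBiproducts C := HasFiniteBiproducts.of_hasFiniteProducts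
    haveI := hasBiproductsOfShape_finite (J := ↥S) (C := C)
    haveI : HasBiproduct (fun x : S => M x.1.as) :=
      HasBiproductsOfShape.has_biproduct _
    let p : (∏ᶜ M) ⟶ ∏ᶜ (fun x : S => M x.1.as) := Pi.lift fun x => Pi.π M x.1.as
    have hcomp : η.app S ≫ p =
        (biproduct.isoCoproduct (fun x : S => M x.1.as)).inv ≫
          (biproduct.isoProduct (fun x : S => M x.1.as)).hom := by
      apply Sigma.hom_ext
      intro x
      apply Pi.hom_ext
      intro y
      simp only [Category.assoc, p]
      erw [limit.lift_π]
      simp only [Fan.mk_π_app, biproduct.isoProduct_hom, biproduct.isoCoproduct_inv,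
        colimit.ι_desc_assoc, Cofan.mk_pt, Cofan.mk_ι_app, limit.lift_π,
        biproduct.lift_π, biproduct.ι_π]
      erw [← Category.assoc, CategoryTheory.Limits.Sigma.ι_desc]
      erw [Category.assoc, limit.lift_π, Fan.mk_π_app, limit.lift_π, Fan.mk_π_app]
      erw [← Category.assoc (Sigma.ι _ x), CategoryTheory.Limits.Sigma.ι_desc]
      erw [biproduct.ι_π]
      by_cases h : x = y
      · subst h
        simp only [dif_pos rfl, eqToHom_refl]
        rfl
      · rw [dif_neg h, dif_neg]
        intro hxy
        exact h (Subtype.ext (Discrete.ext hxy))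
    have : Mono (η.app S ≫ p) := by
      rw [hcomp]; exact mono_comp' (@IsIso.mono_of_iso _ _ _ _ _ (Iso.isIso_inv _)) (@IsIso.mono_of_iso _ _ _ _ _ (Iso.isIso_hom _))
    exact mono_of_mono (η.app S) p
  haveI := happ
  haveI : Mono η := NatTrans.mono_of_mono_app η
  haveI : PreservesFiniteLimits (colim (J := Finset (Discrete I)) (C := C)) :=
    inferInstance
  haveI : Mono (colim.map η) := colim.map_mono η
  let K := (Functor.const (Finset (Discrete I))).obj (∏ᶜ M)
  let t : colimit K ⟶ ∏ᶜ M := colimit.desc _ { pt := ∏ᶜ M, ι := 𝟙 K }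
  let s : (∏ᶜ M) ⟶ colimit K := colimit.ι K ∅
  have hts : t ≫ s = 𝟙 _ := by
    apply colimit.hom_ext
    intro S
    rw [colimit.ι_desc_assoc]
    have hw := colimit.w K (homOfLE (Finset.empty_subset S))
    dsimp [K] at hw ⊢
    rw [Category.id_comp] at hw ⊢
    rw [Category.comp_id, hw]
  haveI : IsSplitMono t := IsSplitMono.mk' ⟨s, hts⟩
  let e : (∐ M) ≅ colimit D := colimit.isoColimitCocone (liftToFinsetColimitCocone F)
  have key : coproductToProductMap M = e.hom ≫ colim.map η ≫ t := by
    apply Sigma.hom_ext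
    intro j
    rw [coproductToProductMap, CategoryTheory.Limits.Sigma.ι_desc, ← Category.assoc]
    rw [show CategoryTheory.Limits.Sigma.ι M j ≫ e.hom =
        (liftToFinsetColimitCocone F).cocone.ι.app (Discrete.mk j) from
      colimit.isoColimitCocone_ι_hom (liftToFinsetColimitCocone F) (Discrete.mk j)]
    dsimp [liftToFinsetColimitCocone]
    erw [Category.assoc, ι_colimMap_assoc]
    rw [colimit.ι_desc]
    dsimp
    erw [Category.comp_id, CategoryTheory.Limits.Sigma.ι_desc]
    rfl
  rw [key]
  infer_instance
end

section
/- Let G be a Grothendieck category that has enough projectives. Then G satisfies Ab4*, i.e., direct products of short exact sequences in G are exact. -/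
open CategoryTheory Limits

section aux

universe v u

variable {G : Type u} [Category.{v} G] [Abelian G] [HasLimits G] [EnoughProjectives G]

/-- With enough projectives, `lim` over a discrete category preserves epimorphisms. -/
lemma lim_map_epi_aux {α : Type v} {X Y : Discrete α ⥤ G} (η : X ⟶ Y) [Epi η] :
    Epi ((lim (J := Discrete α) (C := G)).map η) := by
  have hη : ∀ j, Epi (η.app j) := fun j => inferInstance
  set P := Projective.over (limit Y) with hP
  have hπ : Epi (Projective.π (limit Y)) := inferInstance
  -- lift each component through the epi η.app j
  let l : ∀ j : Discrete α, P ⟶ X.obj j := fun j =>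
    Projective.factorThru (Projective.π (limit Y) ≫ limit.π Y j) (η.app j)
  have hl : ∀ j, l j ≫ η.app j = Projective.π (limit Y) ≫ limit.π Y j := fun j =>
    Projective.factorThru_comp _ _
  let c : Cone X := ⟨P, Discrete.natTrans l⟩
  have hfac : limit.lift X c ≫ limMap η = Projective.π (limit Y) := by
    apply limit.hom_ext
    intro j
    simp [c, hl j]
  have : Epi (limit.lift X c ≫ limMap η) := by rw [hfac]; infer_instance
  exact epi_of_epi (limit.lift X c) (limMap η)

lemma lim_preservesFiniteColimits_aux (α : Type v) :
    PreservesFiniteColimits (lim (J := Discrete α) (C := G)) := by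
  have := preservesBinaryBiproducts_of_preservesBinaryProducts (lim (J := Discrete α) (C := G))
  have hadd : (lim (J := Discrete α) (C := G)).Additive :=
    Functor.additive_of_preservesBinaryBiproducts _
  have hiff2 := (Functor.preservesFiniteColimits_tfae (lim (J := Discrete α) (C := G))).out 0 3
  refine hiff2.mp ?_
  intro S hS
  constructor
  · -- exactness: lim preserves finite limits, so maps short exact to exact
    have hpl : PreservesFiniteLimits (lim (J := Discrete α) (C := G)) := inferInstance
    have hiff := (Functor.preservesFiniteLimits_tfae (lim (J := Discrete α) (C := G))).out 3 0
    have h1 := hiff.mp hpl S hS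
    exact h1.1
  · have : Epi S.g := hS.epi_g
    exact lim_map_epi_aux S.g

end aux

/-- A Grothendieck category (abelian, Ab5, with a generator) that has enough
projectives satisfies Ab4*: direct products of short exact sequences are exact. -/
theorem stmt_3 (G : Type u) [Category.{v} G] [Abelian G] [HasLimits G] [HasColimits G]
    [AB5 G] (U : G) (hU : IsSeparator U) [EnoughProjectives G] : AB4Star G := by
  exact ⟨fun α => ⟨lim_preservesFiniteColimits_aux α⟩⟩
end

section
/- Let G be a Grothendieck category and X ⊆ G a localizing subcategory. Then X is closed under small direct products if and only if every object M of G has a smallest subobject L among those satisfying M/L ∈ X (equivalently, a largest quotient object belonging to X). -/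
open CategoryTheory Limits

/-- The class of morphisms whose kernel and cokernel lie in a class of objects `P`. -/
def serreW {C : Type u} [Category.{v} C] [Abelian C] (P : C → Prop) :
    MorphismProperty C :=
  fun _ _ f => P (kernel f) ∧ P (cokernel f)

/-- The cokernel of the kernel-subobject inclusion (the coimage) embeds into the target. -/
lemma aux_coker_kernelSubobject {C : Type u} [Category.{v} C] [Abelian C] (P : C → Prop)
    (hsub : ∀ ⦃X Y : C⦄ (f : X ⟶ Y), Mono f → P Y → P X)
    {A B : C} (f : A ⟶ B) (hB : P B) : P (cokernel (kernelSubobject f).arrow) := by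
  let e : cokernel (kernelSubobject f).arrow ≅ Abelian.coimage f :=
    cokernel.mapIso _ (kernel.ι f) (kernelSubobjectIso f) (Iso.refl A) (by simp)
  exact hsub (e.hom ≫ (Abelian.coimageIsoImage f).hom ≫ Abelian.image.ι f)
    inferInstance hB

/-- Let `G` be a Grothendieck category and `P` a localizing subcategory (a Serre
subcategory such that the quotient functor admits a right adjoint).  Then `P` is
closed under small direct products if and only if every object `M` has a smallest
subobject `L` among those with `M/L ∈ P` (i.e. a largest quotient in `P`). -/
theorem stmt_6 (G : Type u) [Category.{v} G] [Abelian G] [HasLimits G] [HasColimits G]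
    [AB5 G] (U : G) (hU : IsSeparator U) (P : G → Prop)
    (hsub : ∀ ⦃X Y : G⦄ (f : X ⟶ Y), Mono f → P Y → P X)
    (hquot : ∀ ⦃X Y : G⦄ (f : X ⟶ Y), Epi f → P X → P Y)
    (hext : ∀ (S : ShortComplex G), S.ShortExact → P S.X₁ → P S.X₃ → P S.X₂)
    (hloc : (serreW P).Q.IsLeftAdjoint) :
    (∀ (I : Type v) (M : I → G), (∀ i, P (M i)) → P (∏ᶜ M)) ↔
      ∀ M : G, ∃ L : Subobject M, P (cokernel L.arrow) ∧
        ∀ L' : Subobject M, P (cokernel L'.arrow) → L ≤ L' := by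
  haveI : WellPowered.{v} G := wellPowered_of_isDetector U hU.isDetector
  constructor
  · -- products ⇒ smallest subobject
    intro hprod M
    let S := { L' : Subobject M // P (cokernel L'.arrow) }
    haveI : Small.{v} S := inferInstance
    let κ := Shrink.{v} S
    let e : κ ≃ S := (equivShrink S).symm
    let N : κ → G := fun i => cokernel ((e i).1.arrow)
    let f : M ⟶ ∏ᶜ N := Pi.lift fun i => cokernel.π ((e i).1.arrow)
    refine ⟨kernelSubobject f, ?_, ?_⟩
    · exact aux_coker_kernelSubobject P hsub f
        (hprod κ N fun i => hsub (𝟙 _) inferInstance (e i).2)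
    · intro L' hL'
      have hzero : (kernelSubobject f).arrow ≫ cokernel.π L'.arrow = 0 := by
        have h1 : cokernel.π ((e (equivShrink S ⟨L', hL'⟩)).1.arrow) =
            f ≫ Pi.π N (equivShrink S ⟨L', hL'⟩) := by simp [f]
        have h2 : (e (equivShrink S ⟨L', hL'⟩)).1 = L' := by
          simp [e]
        rw [← h2]
        rw [h1, ← Category.assoc, kernelSubobject_arrow_comp, zero_comp]
      refine Subobject.le_of_comm (Abelian.monoLift L'.arrow _ hzero) ?_
      simp
  · -- smallest subobject ⇒ products
    intro hmin I M hM
    obtain ⟨L, hL, hLmin⟩ := hmin (∏ᶜ M)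
    have hle : ∀ i, L ≤ kernelSubobject (Pi.π M i) := fun i =>
      hLmin _ (aux_coker_kernelSubobject P hsub (Pi.π M i) (hM i))
    have harrow : L.arrow = 0 := by
      apply limit.hom_ext
      intro ⟨i⟩
      have h0 : (kernelSubobject (Pi.π M i)).arrow ≫ limit.π (Discrete.functor M) ⟨i⟩ = 0 :=
        kernelSubobject_arrow_comp _
      rw [zero_comp, ← Subobject.ofLE_arrow (hle i), Category.assoc, h0, comp_zero]
    let e : cokernel L.arrow ≅ ∏ᶜ M := cokernelIsoOfEq harrow ≪≫ cokernelZeroIsoTarget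
    exact hsub e.inv inferInstance hL
end
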